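/- Let V be a finite set with strictly positive probability weights (π(x))_{x∈V}, and fix distinct x, y ∈ V with p := π(x), q := π(y). For any ψ : V × V → ℝ, the quantity ∑_{z∈V} π(z)(ψ(x,z) − ψ(y,z))² − (pq/(p+q))·((ψ(x,x) − ψ(y,x)) + (ψ(y,y) − ψ(x,y)))² is nonnegative. -/
import Mathlib


open Finset

theorem dirichlet_comparison_pointwise_estimate {V : Type*} [Fintype V]
    (π : V → ℝ) (hπpos : ∀ z, 0 < π z) (hπ1 : ∑ z, π z = 1)
    (x y : V) (hxy : x ≠ y) (ψ : V → V → ℝ) :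
    0 ≤ ∑ z, π z * (ψ x z - ψ y z) ^ 2
        - π x * π y / (π x + π y) * ((ψ x x - ψ y x) + (ψ y y - ψ x y)) ^ 2 := by
  classical
  have hp := hπpos x
  have hq := hπpos y
  have hsub : ∑ z ∈ ({x, y} : Finset V), π z * (ψ x z - ψ y z) ^ 2 ≤
      ∑ z, π z * (ψ x z - ψ y z) ^ 2 := by
    apply Finset.sum_le_sum_of_subset_of_nonneg (Finset.subset_univ _)
    intro z _ _
    exact mul_nonneg (hπpos z).le (sq_nonneg _)
  rw [Finset.sum_pair hxy] at hsub
  have hkey : π x * π y / (π x + π y) * ((ψ x x - ψ y x) + (ψ y y - ψ x y)) ^ 2 ≤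
      π x * (ψ x x - ψ y x) ^ 2 + π y * (ψ x y - ψ y y) ^ 2 := by
    rw [div_mul_eq_mul_div, div_le_iff₀ (by linarith)]
    nlinarith [sq_nonneg (π x * (ψ x x - ψ y x) - π y * (ψ y y - ψ x y))]
  linarith
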